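/- (Strict Distance Duality) Let S = {v_1, ..., v_n} be a finite nonempty set of points in ℝ^m and let p ∈ ℝ^m with p ∉ S. Then p ∈ conv(S) if and only if for every p' ∈ conv(S) there exists v_j ∈ S such that (p' − p)ᵀ(v_j − p) ≤ 0 (i.e., the angle ∠p'pv_j is at least π/2; such a v_j is called a strict p-pivot). -/

import Mathlib

/-- **Strict Distance Duality**. Assume `p ∉ S`. Then `p ∈ conv(S)` iff for every
`p' ∈ conv(S)` there exists a strict `p`-pivot `v j`, i.e. `⟪p' - p, v j - p⟫ ≤ 0`. -/
theorem strict_distance_duality {m n : ℕ} (hn : 0 < n)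
    (v : Fin n → EuclideanSpace ℝ (Fin m)) (p : EuclideanSpace ℝ (Fin m))
    (hpS : p ∉ Set.range v) :
    p ∈ convexHull ℝ (Set.range v) ↔
      ∀ p' ∈ convexHull ℝ (Set.range v),
        ∃ j : Fin n, inner ℝ (p' - p) (v j - p) ≤ (0 : ℝ) := by
  constructor
  · intro hp p' hp'
    by_contra hc
    push_neg at hc
    -- all inner products are positive; p lies in the open halfspace, contradiction
    have hconv : Convex ℝ {x : EuclideanSpace ℝ (Fin m) |
        (inner ℝ (p' - p) p : ℝ) < inner ℝ (p' - p) x} := by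
      exact convex_halfSpace_gt ⟨fun a b => inner_add_right _ _ _,
        fun c a => real_inner_smul_right _ _ _⟩ _
    have hsub : Set.range v ⊆ {x : EuclideanSpace ℝ (Fin m) |
        (inner ℝ (p' - p) p : ℝ) < inner ℝ (p' - p) x} := by
      rintro _ ⟨j, rfl⟩
      have := hc j
      have h' : (0 : ℝ) < inner ℝ (p' - p) (v j) - inner ℝ (p' - p) p := by
        have := hc j
        rwa [inner_sub_right] at this
      simpa [Set.mem_setOf_eq] using sub_pos.mp h'
    have := convexHull_min hsub hconv hp
    simp [Set.mem_setOf_eq] at this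
  · intro h
    by_contra hp
    set K := convexHull ℝ (Set.range v) with hK
    have hKconv : Convex ℝ K := convex_convexHull _ _
    have hKne : K.Nonempty := ⟨v ⟨0, hn⟩, subset_convexHull _ _ ⟨⟨0, hn⟩, rfl⟩⟩
    have hKcompact : IsCompact K :=
      (Set.finite_range v).isCompact_convexHull ℝ
    have hKcomplete : IsComplete K := hKcompact.isClosed.isComplete
    obtain ⟨q, hqK, hqmin⟩ :=
      exists_norm_eq_iInf_of_complete_convex hKne hKcomplete hKconv p
    have hchar := (norm_eq_iInf_iff_real_inner_le_zero hKconv hqK).mp hqmin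
    obtain ⟨j, hj⟩ := h q hqK
    have hvjK : v j ∈ K := subset_convexHull _ _ ⟨j, rfl⟩
    have h1 : (inner ℝ (p - q) (v j - q) : ℝ) ≤ 0 := hchar _ hvjK
    have hpq : p ≠ q := fun e => hp (e ▸ hqK)
    have hpos : (0 : ℝ) < inner ℝ (q - p) (v j - p) := by
      have e : (inner ℝ (q - p) (v j - p) : ℝ)
          = inner ℝ (q - p) (v j - q) + inner ℝ (q - p) (q - p) := by
        rw [← inner_add_right]; congr 1; abel
      have h2 : (0 : ℝ) ≤ inner ℝ (q - p) (v j - q) := by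
        have : (inner ℝ (q - p) (v j - q) : ℝ) = -inner ℝ (p - q) (v j - q) := by
          rw [← inner_neg_left, neg_sub]
        linarith [this, h1]
      have h3 : (0 : ℝ) < inner ℝ (q - p) (q - p) := by
        have hne : q - p ≠ 0 := sub_ne_zero.mpr (Ne.symm hpq)
        have := real_inner_self_eq_norm_sq (q - p)
        nlinarith [norm_pos_iff.mpr hne, norm_nonneg (q - p)]
      linarith [e, h2, h3]
    linarith [hj, hpos]
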